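/- Let R be a ring with 1 with centre Z(R), let A be an n×n matrix over R, and let U be an invertible n×n matrix all of whose entries lie in Z(R) (with inverse U⁻¹ also having entries in Z(R)). Then the symmetric characteristic polynomial of UAU⁻¹ equals the symmetric characteristic polynomial of A; in particular, all coefficients λ_0, …, λ_n of the symmetric characteristic polynomial are invariant under the conjugate action of GL_n(Z(R)) on M_n(R). -/

import Mathlib

open Polynomial in
/-- The preadjoint `A*` of an `n × n` matrix `A` over a (possibly noncommutative) ring `R`:
its `(r, s)` entry is the sum, over all permutations `τ, ρ` of `Fin n` with `τ s = s` and
`ρ s = r`, of `sgn ρ` times the ordered product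
`a_{τ(1),ρ(τ(1))} ⋯ a_{τ(s-1),ρ(τ(s-1))} · a_{τ(s+1),ρ(τ(s+1))} ⋯ a_{τ(n),ρ(τ(n))}`
(the factor at position `s` is omitted). -/
def Matrix.preadjoint {n : ℕ} {R : Type*} [Ring R] (A : Matrix (Fin n) (Fin n) R) :
    Matrix (Fin n) (Fin n) R :=
  fun r s =>
    ∑ τ : Equiv.Perm (Fin n), ∑ ρ : Equiv.Perm (Fin n),
      if τ s = s ∧ ρ s = r then
        ((Equiv.Perm.sign ρ : ℤ)) •
          (((List.finRange n).filter (fun k => k ≠ s)).map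
            (fun k => A (τ k) (ρ (τ k)))).prod
      else 0

open Polynomial in
/-- The characteristic matrix `x·I - A` of `A`, as a matrix over `R[x]`. -/
noncomputable def Matrix.charMat {n : ℕ} {R : Type*} [Ring R] (A : Matrix (Fin n) (Fin n) R) :
    Matrix (Fin n) (Fin n) R[X] :=
  (X : R[X]) • (1 : Matrix (Fin n) (Fin n) R[X]) - A.map C

/-- The symmetric determinant `s-det A = tr(A* · A) = tr(A · A*)`. -/
def Matrix.sdet {n : ℕ} {R : Type*} [Ring R] (A : Matrix (Fin n) (Fin n) R) : R :=
  Matrix.trace (A.preadjoint * A)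

open Polynomial in
/-- The symmetric characteristic polynomial `p(x) = s-det(x·I - A) ∈ R[x]`. -/
noncomputable def Matrix.sCharPoly {n : ℕ} {R : Type*} [Ring R] (A : Matrix (Fin n) (Fin n) R) : R[X] :=
  A.charMat.sdet


namespace SCharAux

open Equiv List

variable {R : Type*} [Ring R] {n : ℕ}




lemma center_mul_left_comm {a : R} (ha : a ∈ Set.center R) (b c : R) :
    b * (a * c) = a * (b * c) := by
  rw [← mul_assoc, ← ha.comm b, mul_assoc]

lemma list_prod_center {l : List R} (h : ∀ x ∈ l, x ∈ Set.center R) :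
    l.prod ∈ Set.center R := by
  induction l with
  | nil => simpa using Set.one_mem_center
  | cons a t ih =>
      simpa using Set.mul_mem_center (h a (by simp))
        (ih fun x hx => h x (by simp [hx]))

lemma map_perm_finRange (e : Equiv.Perm (Fin n)) :
    ((List.finRange n).map ⇑e).Perm (List.finRange n) := by
  refine List.perm_of_nodup_nodup_toFinset_eq
    ((List.nodup_finRange n).map e.injective) (List.nodup_finRange n) ?_
  ext x
  simp only [List.mem_toFinset, List.mem_map, List.mem_finRange, iff_true]
  exact ⟨e.symm x, trivial, e.apply_symm_apply x⟩

lemma lprod_comp_perm (f : Fin n → R) (hf : ∀ k, f k ∈ Set.center R)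
    (e : Equiv.Perm (Fin n)) :
    ((List.finRange n).map (fun k => f (e k))).prod = ((List.finRange n).map f).prod := by
  have h1 : (List.finRange n).map (fun k => f (e k)) = ((List.finRange n).map ⇑e).map f := by
    rw [List.map_map]; rfl
  rw [h1]
  refine List.Perm.prod_eq' ((map_perm_finRange e).map f) ?_
  refine List.pairwise_of_forall_mem_list fun a ha b hb => ?_
  simp only [List.mem_map] at ha
  obtain ⟨k, -, rfl⟩ := ha
  exact (hf k).comm b

lemma prod_map_sum {κ : Type*} [Fintype κ] :
    ∀ (m : ℕ) (f : Fin m → κ → R),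
      ((List.finRange m).map (fun k => ∑ x : κ, f k x)).prod
        = ∑ g : Fin m → κ, ((List.finRange m).map (fun k => f k (g k))).prod := by
  intro m
  induction m with
  | zero => intro f; simp
  | succ m ih =>
      intro f
      simp only [List.finRange_succ, List.map_cons, List.prod_cons, List.map_map]
      rw [show ((fun k => ∑ x : κ, f k x) ∘ Fin.succ) = (fun k : Fin m => ∑ x : κ, f k.succ x)
        from rfl, ih (fun k x => f k.succ x), Finset.sum_mul_sum]
      have h2 := Fintype.sum_equiv (Fin.consEquiv (fun _ : Fin (m+1) => κ))
        (fun p : κ × (Fin m → κ) =>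
          f 0 p.1 * ((List.finRange m).map (fun k => f k.succ (p.2 k))).prod)
        (fun g : Fin (m+1) → κ =>
          f 0 (g 0) * ((List.finRange m).map (fun k => f k.succ (g k.succ))).prod)
        (by rintro ⟨x, g⟩; simp)
      rw [Fintype.sum_prod_type] at h2
      rw [h2]
      simp [Function.comp_def]

lemma center_shuffle (a B c P Q S : R) (hc : c ∈ Set.center R)
    (hP : P ∈ Set.center R) (hQ : Q ∈ Set.center R) :
    (a * B * c) * (P * (Q * S)) = (a * P) * ((c * Q) * (B * S)) := by
  calc (a * B * c) * (P * (Q * S))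
      = a * (B * (c * (P * (Q * S)))) := by rw [mul_assoc, mul_assoc]
    _ = a * (B * (P * (c * (Q * S)))) := by rw [center_mul_left_comm hP]
    _ = a * (P * (B * (c * (Q * S)))) := by rw [center_mul_left_comm hP]
    _ = a * (P * (c * (B * (Q * S)))) := by rw [center_mul_left_comm hc]
    _ = a * (P * (c * (Q * (B * S)))) := by rw [center_mul_left_comm hQ]
    _ = (a * P) * ((c * Q) * (B * S)) := by rw [← mul_assoc, ← mul_assoc c Q (B * S), mul_assoc]

lemma central_split {ι : Type*} (u b v : ι → R) (hu : ∀ i, u i ∈ Set.center R)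
    (hv : ∀ i, v i ∈ Set.center R) (l : List ι) :
    (l.map (fun i => u i * b i * v i)).prod
      = (l.map u).prod * ((l.map v).prod * (l.map b).prod) := by
  induction l with
  | nil => simp
  | cons i t ih =>
      simp only [List.map_cons, List.prod_cons, ih]
      exact center_shuffle _ _ _ _ _ _ (hv i)
        (list_prod_center (by intro x hx; simp only [List.mem_map] at hx
                              obtain ⟨k, -, rfl⟩ := hx; exact hu k))
        (list_prod_center (by intro x hx; simp only [List.mem_map] at hx
                              obtain ⟨k, -, rfl⟩ := hx; exact hv k))

lemma sum_fun_eq_sum_perm {M : Type*} [AddCommMonoid M] (F : (Fin n → Fin n) → M)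
    (h0 : ∀ f, ¬ Function.Bijective f → F f = 0) :
    ∑ f : Fin n → Fin n, F f = ∑ φ : Equiv.Perm (Fin n), F ⇑φ := by
  classical
  have h1 : ∑ f : Fin n → Fin n, F f
      = ∑ f ∈ (Finset.univ : Finset (Equiv.Perm (Fin n))).image (fun φ : Equiv.Perm (Fin n) => (φ : Fin n → Fin n)), F f := by
    refine (Finset.sum_subset (Finset.subset_univ _) ?_).symm
    intro f _ hf
    refine h0 f fun hbij => hf ?_
    exact Finset.mem_image.2 ⟨Equiv.ofBijective f hbij, Finset.mem_univ _, rfl⟩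
  rw [h1, Finset.sum_image (fun φ _ ψ _ h => Equiv.coe_fn_injective h)]





def Lr (r : Fin n) : List (Fin n) := ((List.finRange n).filter (fun k => k ≠ r)) ++ [r]

lemma Lr_filter_eq (r : Fin n) :
    (List.finRange n).filter (fun k => k ≠ r) = (List.finRange n).erase r := by
  rw [(List.nodup_finRange n).erase_eq_filter r]
  refine List.filter_congr fun x _ => ?_
  rcases eq_or_ne x r with h | h <;> simp [h]

lemma Lr_length (hn : 0 < n) (r : Fin n) : (Lr r).length = n := by
  have h1 : ((List.finRange n).filter (fun k => k ≠ r)).length = n - 1 := by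
    rw [Lr_filter_eq, List.length_erase_of_mem (List.mem_finRange r), List.length_finRange]
  simp only [Lr, List.length_append, h1, List.length_singleton]
  omega

lemma Lr_nodup (r : Fin n) : (Lr r).Nodup := by
  rw [Lr, List.nodup_append]
  refine ⟨(List.nodup_finRange n).filter _, List.nodup_singleton r, ?_⟩
  intro a ha b hb
  simp only [List.mem_filter] at ha
  simp only [List.mem_singleton] at hb
  subst hb
  simpa using ha.2

lemma Lr_mem (r : Fin n) : ∀ x : Fin n, x ∈ Lr r := by
  intro x
  by_cases hx : x = r
  · subst hx; simp [Lr]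
  · simp [Lr, List.mem_filter, hx]

def cperm (hn : 0 < n) (r : Fin n) : Equiv.Perm (Fin n) :=
  (finCongr (Lr_length hn r).symm).trans
    ((Lr_nodup r).getEquivOfForallMemList (Lr r) (Lr_mem r))

lemma cperm_apply (hn : 0 < n) (r : Fin n) (k : Fin n) :
    cperm hn r k = (Lr r).get (Fin.cast (Lr_length hn r).symm k) := by
  simp [cperm, List.Nodup.getEquivOfForallMemList_apply]

lemma map_cast_finRange {m : ℕ} (h : n = m) :
    (List.finRange n).map (Fin.cast h) = List.finRange m := by
  subst h
  simp

lemma cperm_map (hn : 0 < n) (r : Fin n) :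
    (List.finRange n).map ⇑(cperm hn r) = Lr r := by
  have h : ⇑(cperm hn r) = ((Lr r).get ∘ Fin.cast (Lr_length hn r).symm) := by
    funext k; exact cperm_apply hn r k
  rw [h, ← List.map_map, map_cast_finRange, List.map_get_finRange]

lemma cperm_last (hn : 0 < n) (r : Fin n) (l : Fin n) (hl : (l : ℕ) = n - 1) :
    cperm hn r l = r := by
  rw [cperm_apply]
  rw [List.get_eq_getElem]
  have hfl : ((List.finRange n).filter (fun k => k ≠ r)).length = n - 1 := by
    rw [Lr_filter_eq, List.length_erase_of_mem (List.mem_finRange r), List.length_finRange]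
  have hlen : (l : ℕ) < (Lr r).length := by rw [Lr_length hn r]; omega
  show (Lr r)[(l : ℕ)]'(by simpa using hlen) = r
  rw [List.getElem_of_eq (show Lr r = ((List.finRange n).filter (fun k => k ≠ r)) ++ [r] from rfl) _]
  rw [List.getElem_append_right (by omega)]
  simp [hfl, hl]


def esum (u : Matrix (Fin n) (Fin n) R) (f : Fin n → Fin n) : R :=
  ∑ π : Equiv.Perm (Fin n), ((Equiv.Perm.sign π : ℤ)) •
    ((List.finRange n).map (fun k => u (π k) (f k))).prod

lemma esum_not_inj (u : Matrix (Fin n) (Fin n) R) (hu : ∀ i j, u i j ∈ Set.center R)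
    {f : Fin n → Fin n} (hf : ¬ Function.Injective f) : esum u f = 0 := by
  classical
  simp only [Function.Injective, not_forall] at hf
  obtain ⟨k1, k2, hfk, hk⟩ := hf
  refine Finset.sum_ninvolution (fun π => π * Equiv.swap k1 k2) ?_ ?_
    (fun _ => Finset.mem_univ _) ?_
  · intro π
    have hprod : ((List.finRange n).map (fun k => u ((π * Equiv.swap k1 k2) k) (f k))).prod
        = ((List.finRange n).map (fun k => u (π k) (f k))).prod := by
      have hfun : (fun k => u ((π * Equiv.swap k1 k2) k) (f k))
          = (fun k => u (π (Equiv.swap k1 k2 k)) (f (Equiv.swap k1 k2 k))) := by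
        funext k
        rcases eq_or_ne k k1 with h1 | h1
        · subst h1; simp [Equiv.swap_apply_left, hfk]
        rcases eq_or_ne k k2 with h2 | h2
        · subst h2; simp [Equiv.swap_apply_right, hfk]
        · simp [Equiv.swap_apply_of_ne_of_ne h1 h2]
      rw [hfun]
      exact lprod_comp_perm (fun k => u (π k) (f k)) (fun k => hu _ _) (Equiv.swap k1 k2)
    rw [hprod, Equiv.Perm.sign_mul, Equiv.Perm.sign_swap hk]
    simp only [Units.val_mul, Units.val_neg, Units.val_one, mul_neg_one, neg_smul]
    exact add_neg_cancel _
  · intro π _ heq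
    apply hk
    have h1 : Equiv.swap k1 k2 = 1 := by
      refine mul_left_cancel (a := π) ?_
      rw [mul_one]; exact heq
    have h2 : Equiv.swap k1 k2 k1 = (1 : Equiv.Perm (Fin n)) k1 := by rw [h1]
    simp only [Equiv.swap_apply_left, Equiv.Perm.one_apply] at h2
    exact h2.symm
  · intro π
    show π * Equiv.swap k1 k2 * Equiv.swap k1 k2 = π
    rw [mul_assoc, Equiv.swap_mul_self, mul_one]

lemma esum_perm (u : Matrix (Fin n) (Fin n) R) (hu : ∀ i j, u i j ∈ Set.center R)
    (φ : Equiv.Perm (Fin n)) :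
    esum u ⇑φ = ((Equiv.Perm.sign φ : ℤ)) • esum u (fun k => k) := by
  rw [esum, esum, Finset.smul_sum]
  refine (Fintype.sum_equiv (Equiv.mulRight φ) _ _ fun π => ?_).symm
  simp only [Equiv.coe_mulRight]
  have hp : ((List.finRange n).map (fun k => u ((π * φ) k) (φ k))).prod
      = ((List.finRange n).map (fun k => u (π k) k)).prod := by
    have h0 : (fun k => u ((π * φ) k) (φ k)) = (fun k => u (π (φ k)) (φ k)) := rfl
    rw [h0]
    exact lprod_comp_perm (fun j => u (π j) j) (fun j => hu _ _) φ
  rw [hp, smul_smul, Equiv.Perm.sign_mul, Units.val_mul, mul_comm]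

lemma mem_center_subring {a : R} (ha : a ∈ Set.center R) : a ∈ Subring.center R :=
  Subring.mem_center_iff.mpr (Semigroup.mem_center_iff.mp ha)

def toC (U : Matrix (Fin n) (Fin n) R) (hU : ∀ i j, U i j ∈ Set.center R) :
    Matrix (Fin n) (Fin n) (Subring.center R) :=
  Matrix.of fun i j => (⟨U i j, mem_center_subring (hU i j)⟩ : Subring.center R)

lemma esum_id_coe (w : Matrix (Fin n) (Fin n) (Subring.center R)) :
    esum (w.map (fun z => (z : R))) (fun k => k) = ((w.det : Subring.center R) : R) := by
  classical
  set e := SubringClass.subtype (Subring.center R) with he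
  rw [Matrix.det_apply]
  rw [show (((∑ σ : Equiv.Perm (Fin n), Equiv.Perm.sign σ • ∏ i, w (σ i) i) :
      Subring.center R) : R) = e (∑ σ : Equiv.Perm (Fin n),
        Equiv.Perm.sign σ • ∏ i, w (σ i) i) from rfl]
  rw [map_sum]
  rw [esum]
  refine Finset.sum_congr rfl fun σ _ => ?_
  rw [Units.smul_def, map_zsmul]
  congr 1
  rw [Fin.prod_univ_def, map_list_prod, List.map_map]
  rfl

lemma toC_mul (U V : Matrix (Fin n) (Fin n) R) (hU : ∀ i j, U i j ∈ Set.center R)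
    (hV : ∀ i j, V i j ∈ Set.center R) (hUV : U * V = 1) :
    toC U hU * toC V hV = 1 := by
  ext i j
  have h : (U * V) i j = (1 : Matrix (Fin n) (Fin n) R) i j := by rw [hUV]
  rw [Matrix.mul_apply, Matrix.one_apply] at h
  show (((toC U hU * toC V hV) i j : Subring.center R) : R)
      = (((1 : Matrix (Fin n) (Fin n) (Subring.center R)) i j : Subring.center R) : R)
  rw [Matrix.mul_apply, Matrix.one_apply]
  simp only [AddSubmonoidClass.coe_finset_sum, MulMemClass.coe_mul,
    apply_ite (fun z : Subring.center R => (z : R)), OneMemClass.coe_one,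
    ZeroMemClass.coe_zero, toC, Matrix.of_apply]
  exact h

lemma esum_mul_one (U V : Matrix (Fin n) (Fin n) R) (hU : ∀ i j, U i j ∈ Set.center R)
    (hV : ∀ i j, V i j ∈ Set.center R) (hUV : U * V = 1) :
    esum U (fun k => k) * esum V.transpose (fun k => k) = 1 := by
  have h1 : esum U (fun k => k) = (((toC U hU).det : Subring.center R) : R) := by
    rw [← esum_id_coe]; rfl
  have h2 : esum V.transpose (fun k => k) = ((((toC V hV).transpose).det : Subring.center R) : R) := by
    rw [← esum_id_coe]; rfl
  rw [h1, h2, Matrix.det_transpose, ← MulMemClass.coe_mul, ← Matrix.det_mul,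
    toC_mul U V hU hV hUV, Matrix.det_one, OneMemClass.coe_one]

def D (A : Matrix (Fin n) (Fin n) R) : R :=
  ∑ π : Equiv.Perm (Fin n), ∑ σ : Equiv.Perm (Fin n),
    (((Equiv.Perm.sign π : ℤ)) * ((Equiv.Perm.sign σ : ℤ))) •
      ((List.finRange n).map (fun k => A (π k) (σ k))).prod

lemma sdet_eq_D (hn : 0 < n) (A : Matrix (Fin n) (Fin n) R) : A.sdet = D A := by
  classical
  have hℓ : n - 1 < n := by omega
  have step0 : A.sdet = ∑ s : Fin n, ∑ r : Fin n, A.preadjoint s r * A r s := by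
    simp [Matrix.sdet, Matrix.trace, Matrix.diag, Matrix.mul_apply]
  rw [step0]
  calc
    ∑ s : Fin n, ∑ r : Fin n, A.preadjoint s r * A r s
      = ∑ r : Fin n, ∑ τ : Equiv.Perm (Fin n), ∑ ρ : Equiv.Perm (Fin n),
          if τ r = r then
            ((Equiv.Perm.sign ρ : ℤ)) •
              ((((List.finRange n).filter (fun k => k ≠ r)).map
                (fun k => A (τ k) (ρ (τ k)))).prod * A r (ρ r))
          else 0 := by
        rw [Finset.sum_comm]
        refine Finset.sum_congr rfl fun r _ => ?_
        simp only [Matrix.preadjoint]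
        simp only [Finset.sum_mul, ite_mul, zero_mul]
        rw [Finset.sum_comm]
        refine Finset.sum_congr rfl fun τ _ => ?_
        rw [Finset.sum_comm]
        refine Finset.sum_congr rfl fun ρ _ => ?_
        by_cases hτ : τ r = r
        · simp only [hτ, true_and, if_pos]
          rw [Finset.sum_ite_eq]
          simp [smul_mul_assoc, mul_assoc]
        · simp [hτ]
    _ = ∑ r : Fin n, ∑ π : Equiv.Perm (Fin n), ∑ ρ : Equiv.Perm (Fin n),
          if π ⟨n - 1, hℓ⟩ = r then
            ((Equiv.Perm.sign ρ : ℤ)) •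
              ((List.finRange n).map (fun k => A (π k) (ρ (π k)))).prod
          else 0 := by
        refine Finset.sum_congr rfl fun r _ => ?_
        refine Fintype.sum_equiv (Equiv.mulRight (cperm hn r)) _ _ fun τ => ?_
        simp only [Equiv.coe_mulRight]
        refine Finset.sum_congr rfl fun ρ _ => ?_
        have hcond : (τ * cperm hn r) ⟨n - 1, hℓ⟩ = τ r := by
          rw [Equiv.Perm.mul_apply, cperm_last hn r _ rfl]
        simp only [hcond]
        by_cases hτ : τ r = r
        · rw [if_pos hτ, if_pos hτ]
          congr 1
          have h1 : (List.finRange n).map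
                (fun k => A ((τ * cperm hn r) k) (ρ ((τ * cperm hn r) k)))
              = ((List.finRange n).map ⇑(τ * cperm hn r)).map (fun j => A j (ρ j)) := by
            rw [List.map_map]; rfl
          have h2 : (List.finRange n).map ⇑(τ * cperm hn r)
              = (((List.finRange n).filter (fun k => k ≠ r)).map ⇑τ) ++ [r] := by
            have h3 : ⇑(τ * cperm hn r) = ⇑τ ∘ ⇑(cperm hn r) := rfl
            rw [h3, ← List.map_map, cperm_map hn r, Lr]
            simp [hτ]
          rw [h1, h2, List.map_append, List.map_map, List.prod_append]
          simp [Function.comp_def]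
        · rw [if_neg hτ, if_neg hτ]
    _ = ∑ π : Equiv.Perm (Fin n), ∑ ρ : Equiv.Perm (Fin n),
          ((Equiv.Perm.sign ρ : ℤ)) •
            ((List.finRange n).map (fun k => A (π k) (ρ (π k)))).prod := by
        rw [Finset.sum_comm]
        refine Finset.sum_congr rfl fun π _ => ?_
        rw [Finset.sum_comm]
        refine Finset.sum_congr rfl fun ρ _ => ?_
        simp
    _ = D A := by
        refine Finset.sum_congr rfl fun π _ => ?_
        refine Fintype.sum_equiv (Equiv.mulRight π) _ _ fun ρ => ?_
        simp only [Equiv.coe_mulRight]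
        have h1 : (fun k => A (π k) ((ρ * π) k)) = (fun k => A (π k) (ρ (π k))) := rfl
        rw [h1]
        congr 1
        have h2 : Equiv.Perm.sign π * (Equiv.Perm.sign ρ * Equiv.Perm.sign π)
            = Equiv.Perm.sign ρ := by
          rw [mul_comm (Equiv.Perm.sign ρ), ← mul_assoc, Int.units_mul_self, one_mul]
        rw [Equiv.Perm.sign_mul, ← Units.val_mul, h2]

theorem D_conj (B U V : Matrix (Fin n) (Fin n) R) (hU : ∀ i j, U i j ∈ Set.center R)
    (hV : ∀ i j, V i j ∈ Set.center R) (hUV : U * V = 1) :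
    D (U * B * V) = D B := by
  classical
  have hVT : ∀ i j, V.transpose i j ∈ Set.center R := fun i j => hV j i
  have hentry : ∀ i j, (U * B * V) i j
      = ∑ p : Fin n × Fin n, U i p.1 * B p.1 p.2 * V p.2 j := by
    intro i j
    rw [Fintype.sum_prod_type, Matrix.mul_apply, Finset.sum_comm]
    refine Finset.sum_congr rfl fun q _ => ?_
    rw [Matrix.mul_apply, Finset.sum_mul]
  calc D (U * B * V)
      = ∑ π : Equiv.Perm (Fin n), ∑ σ : Equiv.Perm (Fin n),
          (((Equiv.Perm.sign π : ℤ)) * ((Equiv.Perm.sign σ : ℤ))) •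
            ∑ g : Fin n → Fin n × Fin n,
              ((List.finRange n).map
                (fun k => U (π k) (g k).1 * B (g k).1 (g k).2 * V (g k).2 (σ k))).prod := by
        refine Finset.sum_congr rfl fun π _ => Finset.sum_congr rfl fun σ _ => ?_
        congr 1
        rw [show (fun k => (U * B * V) (π k) (σ k))
            = (fun k => ∑ p : Fin n × Fin n, U (π k) p.1 * B p.1 p.2 * V p.2 (σ k)) from
          funext fun k => hentry (π k) (σ k)]
        exact prod_map_sum n (fun k (p : Fin n × Fin n) => U (π k) p.1 * B p.1 p.2 * V p.2 (σ k))
    _ = ∑ g : Fin n → Fin n × Fin n, ∑ π : Equiv.Perm (Fin n), ∑ σ : Equiv.Perm (Fin n),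
          (((Equiv.Perm.sign π : ℤ)) * ((Equiv.Perm.sign σ : ℤ))) •
            ((List.finRange n).map
              (fun k => U (π k) (g k).1 * B (g k).1 (g k).2 * V (g k).2 (σ k))).prod := by
        simp only [Finset.smul_sum]
        rw [show (∑ π : Equiv.Perm (Fin n), ∑ σ : Equiv.Perm (Fin n),
            ∑ g : Fin n → Fin n × Fin n,
            (((Equiv.Perm.sign π : ℤ)) * ((Equiv.Perm.sign σ : ℤ))) •
              ((List.finRange n).map
                (fun k => U (π k) (g k).1 * B (g k).1 (g k).2 * V (g k).2 (σ k))).prod)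
          = ∑ π : Equiv.Perm (Fin n), ∑ g : Fin n → Fin n × Fin n, ∑ σ : Equiv.Perm (Fin n),
            (((Equiv.Perm.sign π : ℤ)) * ((Equiv.Perm.sign σ : ℤ))) •
              ((List.finRange n).map
                (fun k => U (π k) (g k).1 * B (g k).1 (g k).2 * V (g k).2 (σ k))).prod
          from Finset.sum_congr rfl fun π _ => Finset.sum_comm]
        exact Finset.sum_comm
    _ = ∑ g : Fin n → Fin n × Fin n,
          (∑ π : Equiv.Perm (Fin n), ((Equiv.Perm.sign π : ℤ)) •
              ((List.finRange n).map (fun k => U (π k) (g k).1)).prod)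
          * ((∑ σ : Equiv.Perm (Fin n), ((Equiv.Perm.sign σ : ℤ)) •
              ((List.finRange n).map (fun k => V (g k).2 (σ k))).prod)
             * ((List.finRange n).map (fun k => B (g k).1 (g k).2)).prod) := by
        refine Finset.sum_congr rfl fun g _ => ?_
        have hterm : ∀ (π σ : Equiv.Perm (Fin n)),
            (((Equiv.Perm.sign π : ℤ)) * ((Equiv.Perm.sign σ : ℤ))) •
              ((List.finRange n).map
                (fun k => U (π k) (g k).1 * B (g k).1 (g k).2 * V (g k).2 (σ k))).prod
            = (((Equiv.Perm.sign π : ℤ)) •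
                ((List.finRange n).map (fun k => U (π k) (g k).1)).prod)
              * ((((Equiv.Perm.sign σ : ℤ)) •
                  ((List.finRange n).map (fun k => V (g k).2 (σ k))).prod)
                * ((List.finRange n).map (fun k => B (g k).1 (g k).2)).prod) := by
          intro π σ
          rw [central_split (fun k => U (π k) (g k).1) (fun k => B (g k).1 (g k).2)
            (fun k => V (g k).2 (σ k)) (fun k => hU _ _) (fun k => hV _ _) (List.finRange n)]
          rw [smul_mul_assoc, smul_mul_assoc, mul_smul_comm, smul_smul]
        simp only [hterm, ← Finset.mul_sum, ← Finset.sum_mul]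
    _ = ∑ g : Fin n → Fin n × Fin n,
          esum U (fun k => (g k).1) * (esum V.transpose (fun k => (g k).2)
            * ((List.finRange n).map (fun k => B (g k).1 (g k).2)).prod) := rfl
    _ = ∑ fh : (Fin n → Fin n) × (Fin n → Fin n),
          esum U fh.1 * (esum V.transpose fh.2
            * ((List.finRange n).map (fun k => B (fh.1 k) (fh.2 k))).prod) := by
        refine Fintype.sum_equiv (Equiv.arrowProdEquivProdArrow (Fin n) (fun _ => Fin n) (fun _ => Fin n)) _ _
          fun g => rfl
    _ = ∑ f : Fin n → Fin n, ∑ h : Fin n → Fin n,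
          esum U f * (esum V.transpose h
            * ((List.finRange n).map (fun k => B (f k) (h k))).prod) := by
        rw [Fintype.sum_prod_type]
    _ = ∑ φ : Equiv.Perm (Fin n), ∑ h : Fin n → Fin n,
          esum U ⇑φ * (esum V.transpose h
            * ((List.finRange n).map (fun k => B (φ k) (h k))).prod) := by
        refine sum_fun_eq_sum_perm _ fun f hf => ?_
        have h0 : esum U f = 0 :=
          esum_not_inj U hU fun hinj => hf (Finite.injective_iff_bijective.mp hinj)
        simp [h0]
    _ = ∑ φ : Equiv.Perm (Fin n), ∑ ψ : Equiv.Perm (Fin n),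
          esum U ⇑φ * (esum V.transpose ⇑ψ
            * ((List.finRange n).map (fun k => B (φ k) (ψ k))).prod) := by
        refine Finset.sum_congr rfl fun φ _ => ?_
        refine sum_fun_eq_sum_perm _ fun h hh => ?_
        have h0 : esum V.transpose h = 0 :=
          esum_not_inj V.transpose hVT fun hinj => hh (Finite.injective_iff_bijective.mp hinj)
        simp [h0]
    _ = ∑ φ : Equiv.Perm (Fin n), ∑ ψ : Equiv.Perm (Fin n),
          (((Equiv.Perm.sign φ : ℤ)) * ((Equiv.Perm.sign ψ : ℤ))) •
            ((List.finRange n).map (fun k => B (φ k) (ψ k))).prod := by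
        refine Finset.sum_congr rfl fun φ _ => Finset.sum_congr rfl fun ψ _ => ?_
        rw [esum_perm U hU φ, esum_perm V.transpose hVT ψ]
        rw [smul_mul_assoc, smul_mul_assoc, mul_smul_comm, smul_smul]
        congr 1
        rw [← mul_assoc, esum_mul_one U V hU hV hUV, one_mul]
    _ = D B := rfl

theorem sdet_conj (hn : 0 < n) (B U V : Matrix (Fin n) (Fin n) R)
    (hU : ∀ i j, U i j ∈ Set.center R) (hV : ∀ i j, V i j ∈ Set.center R)
    (hUV : U * V = 1) : (U * B * V).sdet = B.sdet := by
  rw [sdet_eq_D hn, sdet_eq_D hn, D_conj B U V hU hV hUV]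

lemma C_center {r : R} (hr : r ∈ Set.center R) :
    Polynomial.C r ∈ Set.center (Polynomial R) := by
  rw [Semigroup.mem_center_iff]
  intro p
  ext k
  rw [Polynomial.coeff_mul_C, Polynomial.coeff_C_mul]
  exact (Semigroup.mem_center_iff.mp hr) (p.coeff k)

open Polynomial in
lemma charMat_conj (A U V : Matrix (Fin n) (Fin n) R) (hUV : U * V = 1) :
    (U * A * V).charMat = (U.map C) * A.charMat * (V.map C) := by
  unfold Matrix.charMat
  rw [Matrix.mul_sub, Matrix.sub_mul]
  have h1 : (U.map C) * ((X : R[X]) • (1 : Matrix (Fin n) (Fin n) R[X]))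
      = (X : R[X]) • (U.map C) := by
    ext i j
    simp [Matrix.mul_apply, Matrix.smul_apply, Matrix.one_apply, smul_eq_mul, mul_ite,
      mul_zero, mul_one, ite_mul, zero_mul, Finset.sum_ite_eq', Polynomial.X_mul]
  congr 1
  · rw [h1, Matrix.smul_mul, ← Matrix.map_mul, hUV,
      Matrix.map_one _ (map_zero _) (map_one _)]
  · rw [Matrix.map_mul, Matrix.map_mul]

end SCharAux


/-- Invariance of the symmetric characteristic polynomial: if `U` is an invertible `n × n`
matrix whose entries (and the entries of its inverse `V`) lie in the centre `Z(R)` of `R`, then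
the symmetric characteristic polynomial of `U A U⁻¹` equals that of `A`; in particular all its
coefficients are invariant under the conjugate action of `GLₙ(Z(R))` on `Mₙ(R)`. -/
theorem sCharPoly_conj_invariant
    {n : ℕ} {R : Type*} [Ring R] (A U V : Matrix (Fin n) (Fin n) R)
    (hU : ∀ i j : Fin n, U i j ∈ Set.center R)
    (hV : ∀ i j : Fin n, V i j ∈ Set.center R)
    (hUV : U * V = 1) (hVU : V * U = 1) :
    (U * A * V).sCharPoly = A.sCharPoly := by
  rcases Nat.eq_zero_or_pos n with h0 | hn
  · subst h0
    have h : (U * A * V) = A := by ext i j; exact i.elim0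
    rw [h]
  · rw [Matrix.sCharPoly, Matrix.sCharPoly, SCharAux.charMat_conj A U V hUV]
    refine SCharAux.sdet_conj hn A.charMat (U.map Polynomial.C) (V.map Polynomial.C) ?_ ?_ ?_
    · intro i j; exact SCharAux.C_center (hU i j)
    · intro i j; exact SCharAux.C_center (hV i j)
    · rw [← Matrix.map_mul, hUV, Matrix.map_one _ (map_zero _) (map_one _)]
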